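/- Let ℓ be a nonnegative integer. Define 𝔊(x,y,z) = Q_{4ℓ+3}(x,y)·sin z − Q_{4ℓ+3}(x,z)·sin y + Q_{4ℓ+3}(z,x)·cos y + Q_{4ℓ+3}(y,x)·cos z, and let V be the vector field on ℝ³ given by V(x,y,z) = (𝔊(x,y,z), 𝔊(y,z,x), 𝔊(z,x,y)). Then V satisfies the Beltrami equation ∇×V = V. -/

import Mathlib

noncomputable section

open Real

/-- The standard harmonic polynomial `P_n(x,y) = Re((x+iy)^n)`. -/
def polyP (n : ℕ) (x y : ℝ) : ℝ := ((x + y * Complex.I) ^ n).re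

/-- The standard harmonic polynomial `Q_n(x,y) = Im((x+iy)^n)`. -/
def polyQ (n : ℕ) (x y : ℝ) : ℝ := ((x + y * Complex.I) ^ n).im

/-- Partial derivative in the `i`-th coordinate direction. -/
def pd (i : Fin 3) (F : (Fin 3 → ℝ) → ℝ) : (Fin 3 → ℝ) → ℝ :=
  fun v => deriv (fun t => F (Function.update v i t)) (v i)

/-- Divergence of a vector field on ℝ³. -/
def div3 (V : (Fin 3 → ℝ) → (Fin 3 → ℝ)) : (Fin 3 → ℝ) → ℝ :=
  fun v => pd 0 (fun w => V w 0) v + pd 1 (fun w => V w 1) v + pd 2 (fun w => V w 2) v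

/-- Curl of a vector field on ℝ³. -/
def curl3 (V : (Fin 3 → ℝ) → (Fin 3 → ℝ)) : (Fin 3 → ℝ) → (Fin 3 → ℝ) :=
  fun v => ![pd 1 (fun w => V w 2) v - pd 2 (fun w => V w 1) v,
             pd 2 (fun w => V w 0) v - pd 0 (fun w => V w 2) v,
             pd 0 (fun w => V w 1) v - pd 1 (fun w => V w 0) v]

/-- Laplacian of a scalar function on ℝ³. -/
def lap3 (F : (Fin 3 → ℝ) → ℝ) : (Fin 3 → ℝ) → ℝ :=
  fun v => pd 0 (pd 0 F) v + pd 1 (pd 1 F) v + pd 2 (pd 2 F) v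

lemma hbase1 (y x : ℝ) : HasDerivAt (fun x : ℝ => ((x : ℂ) + y * Complex.I)) 1 x := by
  have h : HasDerivAt (fun x : ℝ => (x : ℂ)) 1 x := by
    simpa using (hasDerivAt_id x).ofReal_comp
  simpa using h.add_const ((y:ℝ) * Complex.I)

lemma hQ1 (n : ℕ) (y x : ℝ) :
    HasDerivAt (fun x : ℝ => polyQ (n+1) x y) ((n+1) * polyQ n x y) x := by
  have h : HasDerivAt (fun x : ℝ => ((x : ℂ) + y * Complex.I) ^ (n+1))
      (((n:ℂ)+1) * ((x : ℂ) + y * Complex.I) ^ n) x := by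
    have := HasDerivAt.comp x (hasDerivAt_pow (n+1) (((x:ℂ) + y * Complex.I))) (hbase1 y x)
    simpa [Function.comp_def, mul_comm] using this
  have := Complex.imCLM.hasFDerivAt.comp_hasDerivAt x h
  simpa [Function.comp_def, polyQ, Complex.add_im, Complex.mul_im] using this

lemma hbase2 (x y : ℝ) : HasDerivAt (fun y : ℝ => ((x : ℂ) + y * Complex.I)) Complex.I y := by
  have h : HasDerivAt (fun y : ℝ => (y : ℂ)) 1 y := by
    simpa using (hasDerivAt_id y).ofReal_comp
  simpa using (h.mul_const Complex.I).const_add (x:ℂ)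

lemma hQ2 (n : ℕ) (x y : ℝ) :
    HasDerivAt (fun y : ℝ => polyQ (n+1) x y) ((n+1) * polyP n x y) y := by
  have h : HasDerivAt (fun y : ℝ => ((x : ℂ) + y * Complex.I) ^ (n+1))
      (((n:ℂ)+1) * ((x : ℂ) + y * Complex.I) ^ n * Complex.I) y := by
    have := HasDerivAt.comp y (hasDerivAt_pow (n+1) (((x:ℂ) + y * Complex.I))) (hbase2 x y)
    simpa [Function.comp_def, mul_comm, mul_assoc] using this
  have := Complex.imCLM.hasFDerivAt.comp_hasDerivAt y h
  simpa [Function.comp_def, polyQ, polyP, Complex.add_im, Complex.mul_im, Complex.mul_re] using this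

lemma derivG1 (n : ℕ) (x y z : ℝ) :
    HasDerivAt (fun x : ℝ => polyQ (n+1) x y * Real.sin z - polyQ (n+1) x z * Real.sin y
        + polyQ (n+1) z x * Real.cos y + polyQ (n+1) y x * Real.cos z)
      ((n+1) * polyQ n x y * Real.sin z - (n+1) * polyQ n x z * Real.sin y
        + (n+1) * polyP n z x * Real.cos y + (n+1) * polyP n y x * Real.cos z) x :=
  ((((hQ1 n y x).mul_const (Real.sin z)).sub ((hQ1 n z x).mul_const (Real.sin y))).add
    ((hQ2 n z x).mul_const (Real.cos y))).add ((hQ2 n y x).mul_const (Real.cos z))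

lemma derivG2 (n : ℕ) (x y z : ℝ) :
    HasDerivAt (fun y : ℝ => polyQ (n+1) x y * Real.sin z - polyQ (n+1) x z * Real.sin y
        + polyQ (n+1) z x * Real.cos y + polyQ (n+1) y x * Real.cos z)
      ((n+1) * polyP n x y * Real.sin z - polyQ (n+1) x z * Real.cos y
        + polyQ (n+1) z x * (-Real.sin y) + (n+1) * polyQ n y x * Real.cos z) y :=
  ((((hQ2 n x y).mul_const (Real.sin z)).sub ((Real.hasDerivAt_sin y).const_mul
      (polyQ (n+1) x z))).add ((Real.hasDerivAt_cos y).const_mul (polyQ (n+1) z x))).add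
    ((hQ1 n x y).mul_const (Real.cos z))

lemma derivG3 (n : ℕ) (x y z : ℝ) :
    HasDerivAt (fun z : ℝ => polyQ (n+1) x y * Real.sin z - polyQ (n+1) x z * Real.sin y
        + polyQ (n+1) z x * Real.cos y + polyQ (n+1) y x * Real.cos z)
      (polyQ (n+1) x y * Real.cos z - (n+1) * polyP n x z * Real.sin y
        + (n+1) * polyQ n z x * Real.cos y + polyQ (n+1) y x * (-Real.sin z)) z :=
  ((((Real.hasDerivAt_sin z).const_mul (polyQ (n+1) x y)).sub
      ((hQ2 n x z).mul_const (Real.sin y))).add ((hQ1 n x z).mul_const (Real.cos y))).add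
    ((Real.hasDerivAt_cos z).const_mul (polyQ (n+1) y x))

lemma swap_eq (l : ℕ) (x y : ℝ) :
    ((y : ℂ) + x * Complex.I) ^ (4*l+2) = -(starRingEnd ℂ) (((x:ℂ) + y * Complex.I) ^ (4*l+2)) := by
  have h : ((y : ℂ) + x * Complex.I) = Complex.I * (starRingEnd ℂ) ((x:ℂ) + y * Complex.I) := by
    simp [Complex.ext_iff]
  rw [h, mul_pow, map_pow]
  have h2 : (Complex.I) ^ (4*l+2) = -1 := by
    rw [pow_add, pow_mul]
    simp [Complex.I_pow_four, Complex.I_sq]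
  rw [h2]; ring

lemma polyQ_swap (l : ℕ) (x y : ℝ) : polyQ (4*l+2) y x = polyQ (4*l+2) x y := by
  rw [polyQ, polyQ, swap_eq, Complex.neg_im, Complex.conj_im, neg_neg]

lemma polyP_swap (l : ℕ) (x y : ℝ) : polyP (4*l+2) y x = -polyP (4*l+2) x y := by
  rw [polyP, polyP, swap_eq, Complex.neg_re, Complex.conj_re]


/-- the octahedral field of order `4ℓ+3` satisfies `∇×V = V`. -/
theorem beltrami_octahedral_first (l : ℕ) :
    let G : ℝ → ℝ → ℝ → ℝ := fun x y z =>
      polyQ (4 * l + 3) x y * Real.sin z - polyQ (4 * l + 3) x z * Real.sin y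
        + polyQ (4 * l + 3) z x * Real.cos y + polyQ (4 * l + 3) y x * Real.cos z
    let V : (Fin 3 → ℝ) → (Fin 3 → ℝ) := fun v =>
      ![G (v 0) (v 1) (v 2), G (v 1) (v 2) (v 0), G (v 2) (v 0) (v 1)]
    ∀ v, curl3 V v = V v := by
  intro G V v
  have hG : G = fun x y z =>
      polyQ (4 * l + 2 + 1) x y * Real.sin z - polyQ (4 * l + 2 + 1) x z * Real.sin y
        + polyQ (4 * l + 2 + 1) z x * Real.cos y + polyQ (4 * l + 2 + 1) y x * Real.cos z := rfl
  set a := v 0; set b := v 1; set c := v 2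
  have e0 : ∀ t, Function.update v 0 t = ![t, b, c] := by
    intro t; funext i; fin_cases i <;> simp [Function.update_apply] <;> rfl
  have e1 : ∀ t, Function.update v 1 t = ![a, t, c] := by
    intro t; funext i; fin_cases i <;> simp [Function.update_apply] <;> rfl
  have e2 : ∀ t, Function.update v 2 t = ![a, b, t] := by
    intro t; funext i; fin_cases i <;> simp [Function.update_apply] <;> rfl
  funext i
  fin_cases i
  · show pd 1 (fun w => V w 2) v - pd 2 (fun w => V w 1) v = G a b c
    have h1 : pd 1 (fun w => V w 2) v = deriv (fun t => G c a t) b := by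
      unfold pd; simp only [e1]; rfl
    have h2 : pd 2 (fun w => V w 1) v = deriv (fun t => G b t a) c := by
      unfold pd; simp only [e2]; rfl
    rw [h1, h2, hG]
    rw [(derivG3 (4*l+2) c a b).deriv, (derivG2 (4*l+2) b c a).deriv]
    rw [polyQ_swap l b c, polyP_swap l b c]
    ring
  · show pd 2 (fun w => V w 0) v - pd 0 (fun w => V w 2) v = G b c a
    have h1 : pd 2 (fun w => V w 0) v = deriv (fun t => G a b t) c := by
      unfold pd; simp only [e2]; rfl
    have h2 : pd 0 (fun w => V w 2) v = deriv (fun t => G c t b) a := by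
      unfold pd; simp only [e0]; rfl
    rw [h1, h2, hG]
    rw [(derivG3 (4*l+2) a b c).deriv, (derivG2 (4*l+2) c a b).deriv]
    rw [polyQ_swap l c a, polyP_swap l c a]
    ring
  · show pd 0 (fun w => V w 1) v - pd 1 (fun w => V w 0) v = G c a b
    have h1 : pd 0 (fun w => V w 1) v = deriv (fun t => G b c t) a := by
      unfold pd; simp only [e0]; rfl
    have h2 : pd 1 (fun w => V w 0) v = deriv (fun t => G a t c) b := by
      unfold pd; simp only [e1]; rfl
    rw [h1, h2, hG]
    rw [(derivG3 (4*l+2) b c a).deriv, (derivG2 (4*l+2) a b c).deriv]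
    rw [polyQ_swap l a b, polyP_swap l a b]
    ring
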